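/- With d = √((x_E-x_P)²+(y_E-y_P)²) > 0 and α ∈ (0,1), the gradient of y̲ with respect to the evader coordinates satisfies √((∂y̲/∂x_E)² + (∂y̲/∂y_E)²) = (1/(1-α²))·√(1 + α² - 2α(y_E-y_P)/d). -/

import Mathlib

/-- Norm of the evader-gradient of `y̲`:
`√((∂y̲/∂x_E)² + (∂y̲/∂y_E)²) = (1/(1-α²))·√(1 + α² - 2α(y_E-y_P)/d)`. -/
theorem evader_gradient_norm (xP yP xE yE α d : ℝ)
    (hα0 : 0 < α) (hα1 : α < 1)
    (hd : d = Real.sqrt ((xE - xP)^2 + (yE - yP)^2)) (hdpos : 0 < d) :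
    Real.sqrt ((-(α / (1 - α^2)) * (xE - xP) / d)^2
        + ((1 / (1 - α^2)) * (1 - α * (yE - yP) / d))^2)
      = (1 / (1 - α^2)) * Real.sqrt (1 + α^2 - 2 * α * (yE - yP) / d) := by
  have hd2 : d ^ 2 = (xE - xP)^2 + (yE - yP)^2 := by
    rw [hd]; exact Real.sq_sqrt (by positivity)
  have h1 : (0:ℝ) < 1 - α ^ 2 := by nlinarith
  have hc : (0:ℝ) ≤ 1 / (1 - α^2) := by positivity
  have key : (-(α / (1 - α^2)) * (xE - xP) / d)^2
        + ((1 / (1 - α^2)) * (1 - α * (yE - yP) / d))^2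
      = (1 / (1 - α^2))^2 * (1 + α^2 - 2 * α * (yE - yP) / d) := by
    field_simp
    linear_combination (-α^2) * hd2
  rw [key, Real.sqrt_mul (by positivity), Real.sqrt_sq hc]
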